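/- arXiv:1911.11050 — 3 statements merged into one kernel-verified Lean document; each statement's English description precedes it below -/
import Mathlib

section
/- If c is a bounded complex sequence indexed by the integers and γ > 0, then the sequence r̃ defined by r̃_n = (∑_{k∈ℤ} c_k · conj(c_{n-k}) · e^{-γk²} · e^{-γ(n-k)²}) · e^{γn²/2} is bounded, with ‖r̃‖_∞ ≤ C‖c‖_∞² where C = max(∑_{k∈ℤ} e^{-2γk²}, ∑_{k∈ℤ} e^{-γ(1-2k)²/2}). -/
lemma summable_gauss_int (a : ℝ) (ha : 0 < a) :
    Summable (fun k : ℤ => Real.exp (-a * (k : ℝ)^2)) := by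
  have key : Summable (fun n : ℕ => Real.exp (-a * (n : ℝ)^2)) := by
    apply Summable.of_nonneg_of_le (fun n => (Real.exp_pos _).le)
      (f := fun n : ℕ => Real.exp (-a) ^ n)
    · intro n
      rw [← Real.exp_nat_mul]
      apply Real.exp_le_exp.2
      have h1 : (n : ℝ) ≤ (n : ℝ)^2 := by
        have := Nat.le_self_pow two_ne_zero n
        exact_mod_cast this
      nlinarith
    · exact summable_geometric_of_lt_one (Real.exp_pos _).le
        (Real.exp_lt_one_iff.2 (by linarith))
  apply Summable.of_nat_of_neg
  · exact key
  · convert key using 2 with n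
    · rfl
    · push_cast; ring_nf

theorem stmt1 (γ : ℝ) (hγ : 0 < γ) (c : ℤ → ℂ) (M : ℝ) (hc : ∀ k, ‖c k‖ ≤ M) :
    ∀ n : ℤ,
      ‖(∑' k : ℤ, c k * (starRingEnd ℂ) (c (n - k)) *
            (Real.exp (-γ * (k : ℝ)^2) : ℂ) * (Real.exp (-γ * ((n : ℝ) - (k : ℝ))^2) : ℂ)) *
          (Real.exp (γ * (n : ℝ)^2 / 2) : ℂ)‖ ≤
        (max (∑' k : ℤ, Real.exp (-2 * γ * (k : ℝ)^2))
             (∑' k : ℤ, Real.exp (-γ * (1 - 2*(k : ℝ))^2 / 2))) * M^2 := by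
  intro n
  have hM : 0 ≤ M := le_trans (norm_nonneg _) (hc 0)
  set g : ℤ → ℝ := fun k => Real.exp (-γ * ((n : ℝ) - 2 * (k : ℝ))^2 / 2) with hg
  -- pointwise bound on norms of terms (with the outer exp multiplied in)
  have hterm : ∀ k : ℤ,
      ‖c k * (starRingEnd ℂ) (c (n - k)) *
        (Real.exp (-γ * (k : ℝ)^2) : ℂ) * (Real.exp (-γ * ((n : ℝ) - (k : ℝ))^2) : ℂ) *
        (Real.exp (γ * (n : ℝ)^2 / 2) : ℂ)‖ ≤ M^2 * g k := by
    intro k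
    have hexp : Real.exp (-γ * (k : ℝ)^2) * Real.exp (-γ * ((n : ℝ) - (k : ℝ))^2) *
        Real.exp (γ * (n : ℝ)^2 / 2) = g k := by
      rw [hg, ← Real.exp_add, ← Real.exp_add]
      congr 1; ring
    calc ‖c k * (starRingEnd ℂ) (c (n - k)) *
        (Real.exp (-γ * (k : ℝ)^2) : ℂ) * (Real.exp (-γ * ((n : ℝ) - (k : ℝ))^2) : ℂ) *
        (Real.exp (γ * (n : ℝ)^2 / 2) : ℂ)‖
        = ‖c k‖ * ‖c (n - k)‖ * (Real.exp (-γ * (k : ℝ)^2) * Real.exp (-γ * ((n : ℝ) - (k : ℝ))^2) *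
            Real.exp (γ * (n : ℝ)^2 / 2)) := by
          rw [norm_mul, norm_mul, norm_mul, norm_mul, RCLike.norm_conj,
              Complex.norm_real, Complex.norm_real, Complex.norm_real,
              Real.norm_of_nonneg (Real.exp_pos _).le, Real.norm_of_nonneg (Real.exp_pos _).le,
              Real.norm_of_nonneg (Real.exp_pos _).le]
          ring
      _ = ‖c k‖ * ‖c (n - k)‖ * g k := by rw [hexp]
      _ ≤ M^2 * g k := by
          have hgn : 0 ≤ g k := (Real.exp_pos _).le
          have h12 : ‖c k‖ * ‖c (n - k)‖ ≤ M ^ 2 := by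
            have := hc k; have := hc (n - k)
            nlinarith [norm_nonneg (c k), norm_nonneg (c (n - k))]
          exact mul_le_mul_of_nonneg_right h12 hgn
  -- summability of g
  have hsum_g : Summable g := by
    rcases Int.even_or_odd n with ⟨m, hm⟩ | ⟨m, hm⟩
    · rw [← (Equiv.subLeft m).summable_iff]
      have : (g ∘ (Equiv.subLeft m)) = fun j : ℤ => Real.exp (-(2*γ) * (j : ℝ)^2) := by
        funext j
        simp only [Function.comp, Equiv.subLeft_apply, hg, hm]
        congr 1; push_cast; ring
      rw [this]
      exact summable_gauss_int (2*γ) (by linarith)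
    · rw [← (Equiv.subLeft m).summable_iff]
      have hcomp : (g ∘ (Equiv.subLeft m)) = fun j : ℤ =>
          Real.exp (-γ * (2 * (j : ℝ) + 1)^2 / 2) := by
        funext j
        simp only [Function.comp_apply, Equiv.subLeft_apply, hg, hm]
        congr 1; push_cast; ring
      rw [hcomp]
      apply Summable.of_nonneg_of_le (fun j => (Real.exp_pos _).le)
        (f := fun j : ℤ => Real.exp (-(γ/2) * (j : ℝ)^2))
      · intro j
        apply Real.exp_le_exp.2
        have hsq : ((j : ℝ))^2 ≤ (2 * (j : ℝ) + 1)^2 := by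
          have h31 : 0 ≤ (3 * (j : ℝ) + 1) * ((j : ℝ) + 1) := by
            rcases le_or_gt 0 j with h | h
            · have h' : (0:ℝ) ≤ (j : ℝ) := by exact_mod_cast h
              nlinarith
            · have h' : (j : ℝ) ≤ -1 := by
                have : j ≤ -1 := by omega
                exact_mod_cast this
              nlinarith
          nlinarith
        nlinarith
      · exact summable_gauss_int (γ/2) (by linarith)
  -- value of tsum g bounded by max
  have htsum_g : ∑' k, g k ≤ max (∑' k : ℤ, Real.exp (-2 * γ * (k : ℝ)^2))
             (∑' k : ℤ, Real.exp (-γ * (1 - 2*(k : ℝ))^2 / 2)) := by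
    rcases Int.even_or_odd n with ⟨m, hm⟩ | ⟨m, hm⟩
    · refine le_trans (le_of_eq ?_) (le_max_left _ _)
      rw [← (Equiv.subLeft m).tsum_eq g]
      apply tsum_congr; intro j
      simp only [Equiv.subLeft_apply, hg, hm]
      congr 1; push_cast; ring
    · refine le_trans (le_of_eq ?_) (le_max_right _ _)
      rw [← (Equiv.subLeft m).tsum_eq g, ← (Equiv.neg ℤ).tsum_eq
        (fun k : ℤ => Real.exp (-γ * (1 - 2*(k : ℝ))^2 / 2))]
      apply tsum_congr; intro j
      simp only [Equiv.subLeft_apply, Equiv.neg_apply, hg, hm]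
      congr 1; push_cast; ring
  -- summability of norms
  have hsum_norm : Summable (fun k : ℤ =>
      ‖c k * (starRingEnd ℂ) (c (n - k)) *
        (Real.exp (-γ * (k : ℝ)^2) : ℂ) * (Real.exp (-γ * ((n : ℝ) - (k : ℝ))^2) : ℂ) *
        (Real.exp (γ * (n : ℝ)^2 / 2) : ℂ)‖) :=
    Summable.of_nonneg_of_le (fun k => norm_nonneg _) hterm (hsum_g.mul_left (M^2))
  calc ‖(∑' k : ℤ, c k * (starRingEnd ℂ) (c (n - k)) *
            (Real.exp (-γ * (k : ℝ)^2) : ℂ) * (Real.exp (-γ * ((n : ℝ) - (k : ℝ))^2) : ℂ)) *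
          (Real.exp (γ * (n : ℝ)^2 / 2) : ℂ)‖
      = ‖∑' k : ℤ, c k * (starRingEnd ℂ) (c (n - k)) *
            (Real.exp (-γ * (k : ℝ)^2) : ℂ) * (Real.exp (-γ * ((n : ℝ) - (k : ℝ))^2) : ℂ) *
          (Real.exp (γ * (n : ℝ)^2 / 2) : ℂ)‖ := by rw [tsum_mul_right]
    _ ≤ ∑' k : ℤ, ‖c k * (starRingEnd ℂ) (c (n - k)) *
            (Real.exp (-γ * (k : ℝ)^2) : ℂ) * (Real.exp (-γ * ((n : ℝ) - (k : ℝ))^2) : ℂ) *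
          (Real.exp (γ * (n : ℝ)^2 / 2) : ℂ)‖ := norm_tsum_le_tsum_norm hsum_norm
    _ ≤ ∑' k : ℤ, M^2 * g k := Summable.tsum_le_tsum hterm hsum_norm (hsum_g.mul_left (M^2))
    _ = M^2 * ∑' k, g k := tsum_mul_left
    _ ≤ (max (∑' k : ℤ, Real.exp (-2 * γ * (k : ℝ)^2))
             (∑' k : ℤ, Real.exp (-γ * (1 - 2*(k : ℝ))^2 / 2))) * M^2 := by
        rw [mul_comm]
        exact mul_le_mul_of_nonneg_right htsum_g (by positivity)
end

section
/- If f(x) = ∑_{k∈ℤ} c_k e^{-γ(x-k)²} with c ∈ ℓ^∞(ℤ) and γ > 0, then |f(x)|² = ∑_{n∈ℤ} r̃_n e^{-2γ(x-n/2)²} for all real x, where r̃_n = (∑_{k∈ℤ} c_k conj(c_{n-k}) e^{-γk²} e^{-γ(n-k)²}) e^{γn²/2}. -/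
open Complex Real

private lemma gauss_summable (γ : ℝ) (hγ : 0 < γ) (x : ℝ) :
    Summable fun k : ℤ => Real.exp (-γ * (x - (k : ℝ)) ^ 2) := by
  have hg : Summable fun k : ℤ => Real.exp (-γ * |(k : ℝ)|) := by
    have hnat : Summable fun n : ℕ => Real.exp (-γ * (n : ℝ)) := by
      have := Real.summable_exp_nat_mul_iff.mpr (neg_neg_of_pos hγ)
      simpa [mul_comm] using this
    apply Summable.of_nat_of_neg
    · simpa using hnat
    · simpa using hnat
  apply hg.of_norm_bounded_eventually
  rw [Int.cofinite_eq, Filter.eventually_sup]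
  constructor
  · filter_upwards [Filter.eventually_le_atBot (-(⌈2 * |x| + 4⌉ : ℤ))] with k hk
    have hk' : (k : ℝ) ≤ -(2 * |x| + 4) := by
      calc (k : ℝ) ≤ (-(⌈2 * |x| + 4⌉ : ℤ) : ℝ) := by exact_mod_cast hk
        _ ≤ -(2 * |x| + 4) := by
            have := Int.le_ceil (2 * |x| + 4); linarith
    have habs : |(k : ℝ)| = -(k : ℝ) := abs_of_nonpos (by nlinarith [abs_nonneg x])
    rw [Real.norm_eq_abs, Real.abs_exp, habs, Real.exp_le_exp]
    have h1 : x - k ≥ -(k : ℝ) - |x| := by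
      have := neg_abs_le x; linarith
    have h2 : -(k : ℝ) ≥ 2 * |x| + 4 := by linarith
    have key : -(k : ℝ) ≤ (x - (k : ℝ)) ^ 2 := by nlinarith [abs_nonneg x]
    nlinarith [mul_le_mul_of_nonneg_left key hγ.le]
  · filter_upwards [Filter.eventually_ge_atTop ((⌈2 * |x| + 4⌉ : ℤ))] with k hk
    have hk' : (2 * |x| + 4) ≤ (k : ℝ) := by
      calc (2 * |x| + 4) ≤ ((⌈2 * |x| + 4⌉ : ℤ) : ℝ) := Int.le_ceil _
        _ ≤ (k : ℝ) := by exact_mod_cast hk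
    have habs : |(k : ℝ)| = (k : ℝ) := abs_of_nonneg (by nlinarith [abs_nonneg x])
    rw [Real.norm_eq_abs, Real.abs_exp, habs, Real.exp_le_exp]
    have h1 : (k : ℝ) - x ≥ (k : ℝ) - |x| := by
      have := le_abs_self x; linarith
    have key : (k : ℝ) ≤ (x - (k : ℝ)) ^ 2 := by nlinarith [abs_nonneg x]
    nlinarith [mul_le_mul_of_nonneg_left key hγ.le]

set_option maxHeartbeats 2000000 in
theorem stmt2 (γ : ℝ) (hγ : 0 < γ) (c : ℤ → ℂ) (M : ℝ) (hc : ∀ k, ‖c k‖ ≤ M)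
    (f : ℝ → ℂ)
    (hf : ∀ x : ℝ, f x = ∑' k : ℤ, c k * (Real.exp (-γ * (x - (k : ℝ))^2) : ℂ))
    (r : ℤ → ℂ)
    (hr : ∀ n : ℤ, r n =
      (∑' k : ℤ, c k * (starRingEnd ℂ) (c (n - k)) *
          (Real.exp (-γ * (k : ℝ)^2) : ℂ) * (Real.exp (-γ * ((n : ℝ) - (k : ℝ))^2) : ℂ)) *
        (Real.exp (γ * (n : ℝ)^2 / 2) : ℂ)) :
    ∀ x : ℝ, (‖f x‖^2 : ℂ) = ∑' n : ℤ, r n * (Real.exp (-2*γ*(x - (n : ℝ)/2)^2) : ℂ) := by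
  intro x
  set a : ℤ → ℂ := fun k => c k * (Real.exp (-γ * (x - (k : ℝ)) ^ 2) : ℂ) with ha
  have hbase := gauss_summable γ hγ x
  -- norm summability of a
  have hna : Summable fun k : ℤ => ‖a k‖ := by
    apply Summable.of_nonneg_of_le (fun k => norm_nonneg _)
      (fun k => ?_) (hbase.mul_left M)
    rw [ha]
    simp only [norm_mul, Complex.norm_real, Real.norm_eq_abs, Real.abs_exp]
    exact mul_le_mul_of_nonneg_right (hc k) (Real.exp_nonneg _)
  have hnb : Summable fun k : ℤ => ‖(starRingEnd ℂ) (a k)‖ := by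
    simpa using hna
  -- step 1 : ‖f x‖^2 = ∑' (p : ℤ × ℤ), a p.1 * conj (a p.2)
  have h1 : (‖f x‖ ^ 2 : ℂ) = ∑' p : ℤ × ℤ, a p.1 * (starRingEnd ℂ) (a p.2) := by
    have hfc : f x = ∑' k, a k := hf x
    have hmc : (‖f x‖ ^ 2 : ℂ) = f x * (starRingEnd ℂ) (f x) := by
      rw [Complex.mul_conj, Complex.normSq_eq_norm_sq]
      push_cast
      ring
    have hconj : (starRingEnd ℂ) (∑' l : ℤ, a l) = ∑' l : ℤ, (starRingEnd ℂ) (a l) := by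
      simpa using Complex.conjCLE.toContinuousLinearEquiv.map_tsum (f := a)
    rw [hmc, hfc, hconj]
    exact tsum_mul_tsum_of_summable_norm hna hnb
  -- reindex
  have hprod : Summable fun p : ℤ × ℤ => a p.1 * (starRingEnd ℂ) (a p.2) :=
    summable_mul_of_summable_norm (f := a) (g := fun k => (starRingEnd ℂ) (a k)) hna hnb
  let e : ℤ × ℤ ≃ ℤ × ℤ :=
    ⟨fun p => (p.2, p.1 - p.2), fun p => (p.1 + p.2, p.1), fun p => by simp, fun p => by simp⟩
  have h2 : (∑' p : ℤ × ℤ, a p.1 * (starRingEnd ℂ) (a p.2))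
      = ∑' n : ℤ, ∑' k : ℤ, a k * (starRingEnd ℂ) (a (n - k)) := by
    rw [← e.tsum_eq (fun p : ℤ × ℤ => a p.1 * (starRingEnd ℂ) (a p.2))]
    exact Summable.tsum_prod (e.summable_iff.mpr hprod)
  -- inner sums
  have h3 : ∀ n : ℤ, (∑' k : ℤ, a k * (starRingEnd ℂ) (a (n - k)))
      = r n * (Real.exp (-2*γ*(x - (n : ℝ)/2)^2) : ℂ) := by
    intro n
    have hpt : ∀ k : ℤ, a k * (starRingEnd ℂ) (a (n - k)) =
        (c k * (starRingEnd ℂ) (c (n - k)) *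
          (Real.exp (-γ * (k : ℝ)^2) : ℂ) * (Real.exp (-γ * ((n : ℝ) - (k : ℝ))^2) : ℂ)) *
        ((Real.exp (γ * (n : ℝ)^2 / 2) : ℂ) * (Real.exp (-2*γ*(x - (n : ℝ)/2)^2) : ℂ)) := by
      intro k
      have hexpR : ∀ X K N : ℝ, Real.exp (-γ * (X - K) ^ 2) * Real.exp (-γ * (X - (N - K)) ^ 2)
          = Real.exp (-γ * K^2) * Real.exp (-γ * (N - K)^2) *
            (Real.exp (γ * N^2 / 2) * Real.exp (-2*γ*(X - N/2)^2)) := by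
        intro X K N
        rw [← Real.exp_add, ← Real.exp_add, ← Real.exp_add, ← Real.exp_add, Real.exp_eq_exp]
        ring
      have hexpC : (Real.exp (-γ * (x - (k : ℝ)) ^ 2) : ℂ) *
            (Real.exp (-γ * (x - ((n : ℝ) - (k : ℝ))) ^ 2) : ℂ)
          = (Real.exp (-γ * (k : ℝ)^2) : ℂ) * (Real.exp (-γ * ((n : ℝ) - (k : ℝ))^2) : ℂ) *
            ((Real.exp (γ * (n : ℝ)^2 / 2) : ℂ) * (Real.exp (-2*γ*(x - (n : ℝ)/2)^2) : ℂ)) := by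
        exact_mod_cast hexpR x (k : ℝ) (n : ℝ)
      rw [ha]
      simp only [map_mul, Complex.conj_ofReal]
      push_cast at hexpC ⊢
      linear_combination (c k * (starRingEnd ℂ) (c (n - k))) * hexpC
    calc (∑' k : ℤ, a k * (starRingEnd ℂ) (a (n - k)))
        = ∑' k : ℤ, (c k * (starRingEnd ℂ) (c (n - k)) *
            (Real.exp (-γ * (k : ℝ)^2) : ℂ) * (Real.exp (-γ * ((n : ℝ) - (k : ℝ))^2) : ℂ)) *
          ((Real.exp (γ * (n : ℝ)^2 / 2) : ℂ) * (Real.exp (-2*γ*(x - (n : ℝ)/2)^2) : ℂ)) :=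
          tsum_congr hpt
      _ = (∑' k : ℤ, c k * (starRingEnd ℂ) (c (n - k)) *
            (Real.exp (-γ * (k : ℝ)^2) : ℂ) * (Real.exp (-γ * ((n : ℝ) - (k : ℝ))^2) : ℂ)) *
          ((Real.exp (γ * (n : ℝ)^2 / 2) : ℂ) * (Real.exp (-2*γ*(x - (n : ℝ)/2)^2) : ℂ)) :=
          tsum_mul_right
      _ = r n * (Real.exp (-2*γ*(x - (n : ℝ)/2)^2) : ℂ) := by rw [hr n]; ring
  rw [show (‖f x‖^2 : ℂ) = (‖f x‖ ^ 2 : ℂ) from rfl, h1, h2]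
  exact tsum_congr h3
end

section
/- For every complex number w that is not an integer, lim_{n→∞} ∑_{|k|≤n} 1/(w+k) = π·cot(πw). -/
open Finset Filter Complex Real Topology

-- algebra: symmetric sum over Icc
lemma sum_Icc_eq (w : ℂ) (n : ℕ) :
    ∑ k ∈ Finset.Icc (-(n : ℤ)) (n : ℤ), 1 / (w + (k : ℂ)) =
      1 / w + ∑ j ∈ Finset.range n, (1 / (w + ((j : ℂ) + 1)) + 1 / (w - ((j : ℂ) + 1))) := by
  induction n with
  | zero => simp
  | succ n ih =>
      have h1 : Finset.Icc (-(n + 1 : ℤ)) (n + 1 : ℤ) =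
          insert (-(n + 1 : ℤ)) (insert ((n : ℤ) + 1) (Finset.Icc (-(n : ℤ)) (n : ℤ))) := by
        ext k
        simp only [Finset.mem_Icc, Finset.mem_insert]
        omega
      rw [show ((n+1:ℕ):ℤ) = (n:ℤ)+1 by omega, h1, Finset.sum_insert, Finset.sum_insert]
      · rw [Finset.sum_range_succ]
        push_cast
        rw [ih]
        ring_nf
      · simp only [Finset.mem_Icc]; omega
      · simp only [Finset.mem_insert, Finset.mem_Icc]; omega

lemma fact_ne (w : ℂ) (hw : ∀ k : ℤ, w ≠ (k : ℂ)) (j : ℕ) :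
    (1 : ℂ) - w ^ 2 / ((j : ℂ) + 1) ^ 2 ≠ 0 := by
  have hc : ((j : ℂ) + 1) ≠ 0 := Nat.cast_add_one_ne_zero j
  intro h
  have h2 : w ^ 2 = ((j : ℂ) + 1) ^ 2 := by
    field_simp at h
    linear_combination -h
  have h3 : (w - ((j : ℂ) + 1)) * (w + ((j : ℂ) + 1)) = 0 := by ring_nf; linear_combination h2
  rcases mul_eq_zero.mp h3 with h4 | h4
  · exact hw ((j : ℤ) + 1) (by push_cast; linear_combination h4)
  · exact hw (-((j : ℤ) + 1)) (by push_cast; linear_combination h4)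

lemma logDeriv_factor (w : ℂ) (hw : ∀ k : ℤ, w ≠ (k : ℂ)) (j : ℕ) :
    logDeriv (fun z : ℂ => 1 - z ^ 2 / ((j : ℂ) + 1) ^ 2) w =
      1 / (w + ((j : ℂ) + 1)) + 1 / (w - ((j : ℂ) + 1)) := by
  have hc : ((j : ℂ) + 1) ≠ 0 := Nat.cast_add_one_ne_zero j
  have hne := fact_ne w hw j
  have hp : w + ((j : ℂ) + 1) ≠ 0 := by
    intro h
    exact hw (-((j : ℤ) + 1)) (by push_cast; linear_combination h)
  have hm : w - ((j : ℂ) + 1) ≠ 0 := by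
    intro h
    exact hw ((j : ℤ) + 1) (by push_cast; linear_combination h)
  have hd : HasDerivAt (fun z : ℂ => 1 - z ^ 2 / ((j : ℂ) + 1) ^ 2)
      (-((2 * w) / ((j : ℂ) + 1) ^ 2)) w := by
    have := ((hasDerivAt_pow 2 w).div_const (((j : ℂ) + 1) ^ 2)).const_sub 1
    simpa using this
  have hcw : ((j : ℂ) + 1) ^ 2 - w ^ 2 ≠ 0 := by
    intro h
    apply hne
    field_simp
    linear_combination h
  rw [logDeriv_apply, hd.deriv]
  have e1 : (1 : ℂ) - w ^ 2 / ((j : ℂ) + 1) ^ 2 = (((j : ℂ) + 1) ^ 2 - w ^ 2) / ((j : ℂ) + 1) ^ 2 := by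
    field_simp
  rw [e1]
  field_simp
  ring

lemma logDeriv_F (w : ℂ) (hw : ∀ k : ℤ, w ≠ (k : ℂ)) (n : ℕ) :
    logDeriv (fun z : ℂ => (Real.pi : ℂ) * z *
        ∏ j ∈ Finset.range n, (1 - z ^ 2 / ((j : ℂ) + 1) ^ 2)) w =
      ∑ k ∈ Finset.Icc (-(n : ℤ)) (n : ℤ), 1 / (w + (k : ℂ)) := by
  have hw0 : w ≠ 0 := by simpa using hw 0
  have hpi : (Real.pi : ℂ) ≠ 0 := by
    exact_mod_cast Real.pi_ne_zero
  rw [sum_Icc_eq]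
  have hmul : logDeriv (fun z : ℂ => ((Real.pi : ℂ) * z) *
      ∏ j ∈ Finset.range n, (1 - z ^ 2 / ((j : ℂ) + 1) ^ 2)) w =
      logDeriv (fun z : ℂ => (Real.pi : ℂ) * z) w +
      logDeriv (fun z : ℂ => ∏ j ∈ Finset.range n, (1 - z ^ 2 / ((j : ℂ) + 1) ^ 2)) w := by
    apply logDeriv_mul
    · exact mul_ne_zero hpi hw0
    · exact Finset.prod_ne_zero_iff.mpr fun j _ => fact_ne w hw j
    · fun_prop
    · apply DifferentiableAt.fun_finsetProd
      intro j _
      fun_prop (disch := intro h; exact Nat.cast_add_one_ne_zero j (by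
        have : ((j : ℂ) + 1) = 0 := by exact pow_eq_zero_iff (n := 2) (by norm_num) |>.mp h
        exact this))
  rw [hmul]
  congr 1
  · rw [logDeriv_apply]
    have : HasDerivAt (fun z : ℂ => (Real.pi : ℂ) * z) (Real.pi : ℂ) w := by
      simpa using (hasDerivAt_id w).const_mul (Real.pi : ℂ)
    rw [this.deriv]
    field_simp
  · rw [logDeriv_prod]
    · exact Finset.sum_congr rfl fun j _ => logDeriv_factor w hw j
    · exact fun j _ => fact_ne w hw j
    · intro j _
      fun_prop (disch := exact pow_ne_zero 2 (Nat.cast_add_one_ne_zero j))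

lemma norm_prod_one_add_sub_one_le (s : Finset ℕ) (f : ℕ → ℂ) :
    ‖(∏ i ∈ s, (1 + f i)) - 1‖ ≤ (∏ i ∈ s, (1 + ‖f i‖)) - 1 := by
  classical
  induction s using Finset.induction with
  | empty => simp
  | @insert a s ha ih =>
      rw [Finset.prod_insert ha, Finset.prod_insert ha]
      have h1 : (1 + f a) * ∏ i ∈ s, (1 + f i) - 1 =
          ((∏ i ∈ s, (1 + f i)) - 1) + f a * ∏ i ∈ s, (1 + f i) := by ring
      have hQ : (1 : ℝ) ≤ ∏ i ∈ s, (1 + ‖f i‖) := by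
        calc (1:ℝ) = ∏ _i ∈ s, 1 := by simp
          _ ≤ ∏ i ∈ s, (1 + ‖f i‖) := by
              apply Finset.prod_le_prod
              · intros; norm_num
              · intro i _; linarith [norm_nonneg (f i)]
      have hP : ‖∏ i ∈ s, (1 + f i)‖ ≤ ∏ i ∈ s, (1 + ‖f i‖) := by
        calc ‖∏ i ∈ s, (1 + f i)‖ = ‖((∏ i ∈ s, (1 + f i)) - 1) + 1‖ := by ring_nf
          _ ≤ ‖(∏ i ∈ s, (1 + f i)) - 1‖ + 1 := by
              simpa using norm_add_le ((∏ i ∈ s, (1 + f i)) - 1) 1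
          _ ≤ ((∏ i ∈ s, (1 + ‖f i‖)) - 1) + 1 := by linarith
          _ = ∏ i ∈ s, (1 + ‖f i‖) := by ring
      calc ‖(1 + f a) * ∏ i ∈ s, (1 + f i) - 1‖
          ≤ ‖(∏ i ∈ s, (1 + f i)) - 1‖ + ‖f a‖ * ‖∏ i ∈ s, (1 + f i)‖ := by
            rw [h1]
            refine (norm_add_le _ _).trans ?_
            rw [norm_mul]
        _ ≤ ((∏ i ∈ s, (1 + ‖f i‖)) - 1) + ‖f a‖ * ∏ i ∈ s, (1 + ‖f i‖) := by
            have := mul_le_mul_of_nonneg_left hP (norm_nonneg (f a))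
            linarith
        _ = (1 + ‖f a‖) * ∏ i ∈ s, (1 + ‖f i‖) - 1 := by ring

lemma prod_one_add_le_exp (s : Finset ℕ) (a : ℕ → ℝ) (ha : ∀ i, 0 ≤ a i) :
    ∏ i ∈ s, (1 + a i) ≤ Real.exp (∑ i ∈ s, a i) := by
  rw [Real.exp_sum]
  apply Finset.prod_le_prod
  · intro i _; linarith [ha i]
  · intro i _; linarith [Real.add_one_le_exp (a i)]

lemma sum_Ico_inv_sq_le (m : ℕ) (hm : 1 ≤ m) : ∀ n : ℕ, m ≤ n →
    ∑ j ∈ Finset.Ico m n, (1 : ℝ) / ((j : ℝ) + 1) ^ 2 ≤ 1 / (m : ℝ) - 1 / (n : ℝ) := by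
  intro n
  induction n with
  | zero => intro h; omega
  | succ N ih =>
      intro h
      rcases Nat.lt_or_ge N m with hNm | hNm
      · have hNm' : m = N + 1 := by omega
        subst hNm'
        simp
      · have hsplit : Finset.Ico m (N + 1) = insert N (Finset.Ico m N) := by
          rw [Nat.Ico_succ_right_eq_insert_Ico hNm]
        rw [hsplit, Finset.sum_insert (by simp)]
        have hN0 : (0 : ℝ) < N := by
          have : 1 ≤ N := le_trans hm hNm
          exact_mod_cast this
        have hstep : (1 : ℝ) / ((N : ℝ) + 1) ^ 2 ≤ 1 / N - 1 / ((N : ℝ) + 1) := by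
          rw [div_sub_div _ _ (ne_of_gt hN0) (by positivity)]
          rw [div_le_div_iff₀ (by positivity) (by positivity)]
          nlinarith [sq_nonneg ((N : ℝ))]
        have := ih hNm
        push_cast
        push_cast at this
        linarith

noncomputable def Fn (n : ℕ) (z : ℂ) : ℂ :=
  (Real.pi : ℂ) * z * ∏ j ∈ Finset.range n, (1 - z ^ 2 / ((j : ℂ) + 1) ^ 2)

lemma norm_g_le (T : ℝ) (z : ℂ) (hz : ‖z‖ ≤ T) (hT : 0 ≤ T) (j : ℕ) :
    ‖-(z ^ 2 / ((j : ℂ) + 1) ^ 2)‖ ≤ T ^ 2 * (1 / ((j : ℝ) + 1) ^ 2) := by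
  have hj : ((j : ℂ) + 1) = ((j + 1 : ℕ) : ℂ) := by push_cast; ring
  rw [norm_neg, norm_div, norm_pow, norm_pow, hj, Complex.norm_natCast, mul_one_div]
  push_cast
  gcongr

lemma sum_range_inv_sq_le_two (m : ℕ) :
    ∑ j ∈ Finset.range m, (1 : ℝ) / ((j : ℝ) + 1) ^ 2 ≤ 2 := by
  rcases Nat.eq_zero_or_pos m with rfl | hm
  · simp
  · have hsplit : Finset.range m = insert 0 (Finset.Ico 1 m) := by
      ext k
      simp only [Finset.mem_range, Finset.mem_insert, Finset.mem_Ico]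
      omega
    rw [hsplit, Finset.sum_insert (by simp)]
    have := sum_Ico_inv_sq_le 1 le_rfl m hm
    have hn : (0:ℝ) ≤ ((m:ℝ))⁻¹ := by positivity
    norm_num at this ⊢
    linarith

lemma Fn_diff_bound (T : ℝ) (hT : 1 ≤ T) (m n : ℕ) (hm : 1 ≤ m) (hmn : m ≤ n)
    (z : ℂ) (hz : ‖z‖ ≤ T) :
    ‖Fn n z - Fn m z‖ ≤ (Real.pi * T * Real.exp (2 * T ^ 2)) * (Real.exp (T ^ 2 / m) - 1) := by
  have hT0 : (0:ℝ) ≤ T := le_trans zero_le_one hT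
  set g : ℕ → ℂ := fun j => -(z ^ 2 / ((j : ℂ) + 1) ^ 2) with hg
  have hfac : ∀ j : ℕ, (1 : ℂ) - z ^ 2 / ((j : ℂ) + 1) ^ 2 = 1 + g j := by
    intro j; simp only [hg]; ring
  have hsplit : Fn n z = Fn m z * ∏ j ∈ Finset.Ico m n, (1 + g j) := by
    unfold Fn
    rw [mul_assoc, ← Finset.prod_range_mul_prod_Ico _ hmn]
    simp_rw [hfac]
    ring
  have hsum_m : ∑ j ∈ Finset.range m, ‖g j‖ ≤ 2 * T ^ 2 := by
    calc ∑ j ∈ Finset.range m, ‖g j‖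
        ≤ ∑ j ∈ Finset.range m, T ^ 2 * (1 / ((j : ℝ) + 1) ^ 2) :=
          Finset.sum_le_sum fun j _ => norm_g_le T z hz hT0 j
      _ = T ^ 2 * ∑ j ∈ Finset.range m, (1 : ℝ) / ((j : ℝ) + 1) ^ 2 := by
          rw [Finset.mul_sum]
      _ ≤ T ^ 2 * 2 := by
          have := sum_range_inv_sq_le_two m
          nlinarith [sq_nonneg T]
      _ = 2 * T ^ 2 := by ring
  have hsum_Ico : ∑ j ∈ Finset.Ico m n, ‖g j‖ ≤ T ^ 2 / m := by
    calc ∑ j ∈ Finset.Ico m n, ‖g j‖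
        ≤ ∑ j ∈ Finset.Ico m n, T ^ 2 * (1 / ((j : ℝ) + 1) ^ 2) :=
          Finset.sum_le_sum fun j _ => norm_g_le T z hz hT0 j
      _ = T ^ 2 * ∑ j ∈ Finset.Ico m n, (1 : ℝ) / ((j : ℝ) + 1) ^ 2 := by
          rw [Finset.mul_sum]
      _ ≤ T ^ 2 * (1 / (m:ℝ) - 1 / (n:ℝ)) := by
          have := sum_Ico_inv_sq_le m hm n hmn
          nlinarith [sq_nonneg T]
      _ ≤ T ^ 2 / m := by
          have hn : (0:ℝ) ≤ 1 / (n:ℝ) := by positivity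
          have : T ^ 2 * (1 / (m:ℝ) - 1 / (n:ℝ)) ≤ T ^ 2 * (1 / (m:ℝ)) := by
            nlinarith [sq_nonneg T]
          calc T ^ 2 * (1 / (m:ℝ) - 1 / (n:ℝ)) ≤ T ^ 2 * (1 / (m:ℝ)) := this
            _ = T ^ 2 / m := by ring
  have hFm : ‖Fn m z‖ ≤ Real.pi * T * Real.exp (2 * T ^ 2) := by
    unfold Fn
    simp_rw [hfac]
    rw [norm_mul, norm_mul, Complex.norm_real, Real.norm_eq_abs,
      abs_of_pos Real.pi_pos]
    have h1 : ‖∏ j ∈ Finset.range m, (1 + g j)‖ ≤ Real.exp (2 * T ^ 2) := by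
      calc ‖∏ j ∈ Finset.range m, (1 + g j)‖
          ≤ ∏ j ∈ Finset.range m, (1 + ‖g j‖) := by
            have h := _root_.norm_prod_one_add_sub_one_le (Finset.range m) g
            have h2 : ‖∏ j ∈ Finset.range m, (1 + g j)‖ ≤
                ‖(∏ j ∈ Finset.range m, (1 + g j)) - 1‖ + 1 := by
              simpa using norm_add_le ((∏ j ∈ Finset.range m, (1 + g j)) - 1) 1
            linarith
        _ ≤ Real.exp (∑ j ∈ Finset.range m, ‖g j‖) :=
            prod_one_add_le_exp _ _ fun i => norm_nonneg _
        _ ≤ Real.exp (2 * T ^ 2) := Real.exp_le_exp.mpr hsum_m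
    have hz' : Real.pi * ‖z‖ ≤ Real.pi * T := mul_le_mul_of_nonneg_left hz Real.pi_pos.le
    exact mul_le_mul hz' h1 (norm_nonneg _) (by positivity)
  have htail : ‖(∏ j ∈ Finset.Ico m n, (1 + g j)) - 1‖ ≤ Real.exp (T ^ 2 / m) - 1 := by
    calc ‖(∏ j ∈ Finset.Ico m n, (1 + g j)) - 1‖
        ≤ (∏ j ∈ Finset.Ico m n, (1 + ‖g j‖)) - 1 :=
          norm_prod_one_add_sub_one_le _ _
      _ ≤ Real.exp (∑ j ∈ Finset.Ico m n, ‖g j‖) - 1 := by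
          have := prod_one_add_le_exp (Finset.Ico m n) (fun j => ‖g j‖)
            (fun i => norm_nonneg _)
          linarith
      _ ≤ Real.exp (T ^ 2 / m) - 1 := by
          have := Real.exp_le_exp.mpr hsum_Ico
          linarith
  have e : Fn n z - Fn m z = Fn m z * ((∏ j ∈ Finset.Ico m n, (1 + g j)) - 1) := by
    rw [hsplit]; ring
  rw [e, norm_mul]
  exact mul_le_mul hFm htail (norm_nonneg _) (by positivity)

lemma Fn_differentiable (n : ℕ) : Differentiable ℂ (Fn n) := by
  unfold Fn
  apply Differentiable.mul
  · exact (differentiable_id.const_mul _)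
  · apply Differentiable.fun_finsetProd
    intro j _
    exact ((differentiable_pow 2).div_const _).const_sub 1

theorem stmt11 (w : ℂ) (hw : ∀ k : ℤ, w ≠ (k : ℂ)) :
    Filter.Tendsto (fun n : ℕ => ∑ k ∈ Finset.Icc (-(n : ℤ)) (n : ℤ), 1 / (w + (k : ℂ)))
      Filter.atTop (nhds ((Real.pi : ℂ) * Complex.cot (Real.pi * w))) := by
  set T : ℝ := ‖w‖ + 1 with hTdef
  have hT1 : (1:ℝ) ≤ T := by simp only [hTdef]; linarith [norm_nonneg w]
  have hT0 : (0:ℝ) ≤ T := le_trans zero_le_one hT1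
  set s : Set ℂ := Metric.ball 0 T with hsdef
  have hws : w ∈ s := by
    simp only [hsdef, Metric.mem_ball, dist_zero_right, hTdef]
    linarith
  set C : ℝ := Real.pi * T * Real.exp (2 * T ^ 2) with hCdef
  have hC0 : 0 ≤ C := by positivity
  -- uniform Cauchy
  have hcauchy : UniformCauchySeqOn Fn atTop s := by
    rw [Metric.uniformCauchySeqOn_iff]
    intro ε hε
    have hlim : Tendsto (fun m : ℕ => C * (Real.exp (T ^ 2 / m) - 1)) atTop (𝓝 0) := by
      have h1 : Tendsto (fun m : ℕ => T ^ 2 / (m:ℝ)) atTop (𝓝 0) :=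
        tendsto_const_div_atTop_nhds_zero_nat _
      have h2 : Tendsto (fun m : ℕ => Real.exp (T ^ 2 / m) - 1) atTop (𝓝 0) := by
        have := (Real.continuous_exp.tendsto 0).comp h1
        simpa using this.sub_const 1
      simpa using h2.const_mul C
    have hev : ∀ᶠ m : ℕ in atTop, C * (Real.exp (T ^ 2 / m) - 1) < ε :=
      hlim.eventually_lt_const hε
    obtain ⟨N, hN1, hN⟩ : ∃ N : ℕ, 1 ≤ N ∧ C * (Real.exp (T ^ 2 / N) - 1) < ε := by
      obtain ⟨N, hN⟩ := ((eventually_ge_atTop 1).and hev).exists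
      exact ⟨N, hN.1, hN.2⟩
    refine ⟨N, fun m hm n hn x hx => ?_⟩
    have hxT : ‖x‖ ≤ T := le_of_lt (by simpa [hsdef, Metric.mem_ball, dist_zero_right] using hx)
    have key : ∀ a b : ℕ, N ≤ a → a ≤ b → dist (Fn a x) (Fn b x) < ε := by
      intro a b ha hab
      have h1 : ‖Fn b x - Fn a x‖ ≤ C * (Real.exp (T ^ 2 / a) - 1) :=
        Fn_diff_bound T hT1 a b (le_trans hN1 ha) hab x hxT
      have hmono : Real.exp (T ^ 2 / a) ≤ Real.exp (T ^ 2 / N) := by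
        apply Real.exp_le_exp.mpr
        apply div_le_div_of_nonneg_left (by positivity) (by exact_mod_cast hN1)
        exact_mod_cast ha
      have h2 : C * (Real.exp (T ^ 2 / a) - 1) ≤ C * (Real.exp (T ^ 2 / N) - 1) := by
        apply mul_le_mul_of_nonneg_left _ hC0
        linarith
      rw [dist_eq_norm, ← norm_neg]
      simp only [neg_sub]
      linarith
    rcases le_total m n with h | h
    · exact key m n hm h
    · rw [dist_comm]; exact key n m hn h
  -- uniform convergence to sin(πz)
  have hptw : ∀ x ∈ s, Tendsto (fun n => Fn n x) atTop (𝓝 (Complex.sin ((Real.pi : ℂ) * x))) := by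
    intro x _
    simpa [Fn] using Complex.tendsto_euler_sin_prod x
  have huni : TendstoUniformlyOn Fn (fun z => Complex.sin ((Real.pi : ℂ) * z)) atTop s :=
    hcauchy.tendstoUniformlyOn_of_tendsto hptw
  have hlocal : TendstoLocallyUniformlyOn Fn (fun z => Complex.sin ((Real.pi : ℂ) * z)) atTop s :=
    huni.tendstoLocallyUniformlyOn
  have hderiv : TendstoLocallyUniformlyOn (deriv ∘ Fn)
      (deriv fun z => Complex.sin ((Real.pi : ℂ) * z)) atTop s :=
    hlocal.deriv (Filter.Eventually.of_forall fun n => (Fn_differentiable n).differentiableOn)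
      Metric.isOpen_ball
  have h1 : Tendsto (fun n => deriv (Fn n) w) atTop
      (𝓝 (deriv (fun z => Complex.sin ((Real.pi : ℂ) * z)) w)) := hderiv.tendsto_at hws
  have hsinderiv : deriv (fun z : ℂ => Complex.sin ((Real.pi : ℂ) * z)) w =
      (Real.pi : ℂ) * Complex.cos ((Real.pi : ℂ) * w) := by
    have h : HasDerivAt (fun z : ℂ => Complex.sin ((Real.pi : ℂ) * z))
        (Complex.cos ((Real.pi : ℂ) * w) * (Real.pi : ℂ)) w := by
      have := (Complex.hasDerivAt_sin ((Real.pi : ℂ) * w)).comp w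
        (by simpa using (hasDerivAt_id w).const_mul (Real.pi : ℂ))
      exact this
    rw [h.deriv]; ring
  have h2 : Tendsto (fun n => Fn n w) atTop (𝓝 (Complex.sin ((Real.pi : ℂ) * w))) :=
    hptw w hws
  have hsin0 : Complex.sin ((Real.pi : ℂ) * w) ≠ 0 := by
    rw [Complex.sin_ne_zero_iff]
    intro k h
    apply hw k
    have hpi : (Real.pi : ℂ) ≠ 0 := by exact_mod_cast Real.pi_ne_zero
    rw [mul_comm] at h
    exact mul_right_cancel₀ hpi h
  have h3 : Tendsto (fun n => deriv (Fn n) w / Fn n w) atTop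
      (𝓝 ((Real.pi : ℂ) * Complex.cos ((Real.pi : ℂ) * w) / Complex.sin ((Real.pi : ℂ) * w))) := by
    rw [← hsinderiv]
    exact h1.div h2 hsin0
  have hterm : ∀ n : ℕ, deriv (Fn n) w / Fn n w =
      ∑ k ∈ Finset.Icc (-(n : ℤ)) (n : ℤ), 1 / (w + (k : ℂ)) := by
    intro n
    rw [← logDeriv_apply]
    exact logDeriv_F w hw n
  have hfinal := h3.congr hterm
  have hcot : (Real.pi : ℂ) * Complex.cos ((Real.pi : ℂ) * w) / Complex.sin ((Real.pi : ℂ) * w) =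
      (Real.pi : ℂ) * Complex.cot ((Real.pi : ℂ) * w) := by
    rw [Complex.cot_eq_cos_div_sin]
    ring
  rw [hcot] at hfinal
  exact hfinal
end
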